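/- For every strictly increasing map ψ : [n] → [ℓ] and Fox-Neuwirth tree Λ ∈ FN_m(n), the twisted morphism ψ^Λ : [n] → [ℓ] defined by ψ^Λ(0) = ψ(0) and ψ^Λ(s) = (σ^{ψΛ})⁻¹(ψ(σ^Λ(s))) for s ≥ 1 is strictly increasing. -/

import Mathlib

/-- The simplicial coface map `d_u`, the strictly increasing map skipping `u`. -/
def cofaceN (u p : ℕ) : ℕ := if p < u then p else p + 1

/-- The simplicial codegeneracy map `s_u`, identifying `u` and `u+1`. -/
def codegN (u x : ℕ) : ℕ := if x ≤ u then x else x - 1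

/-- The data of a Fox–Neuwirth tree: a label permutation `perm` of `{1,…,n}`
(with inverse `inv`) and depth indices `depth k` (for `1 ≤ k ≤ n−1`). -/
structure PreTree where
  perm : ℕ → ℕ
  inv : ℕ → ℕ
  depth : ℕ → ℕ

/-- Well-formedness: `Λ` is a Fox–Neuwirth tree of height `m` on `n` leaves, i.e.
`perm` is a permutation of `{1,…,n}` with two-sided inverse `inv`, and the depth
indices lie in `{0,…,m−1}`. -/
def PreTree.Wf (m n : ℕ) (Λ : PreTree) : Prop :=
  (∀ k, 1 ≤ k → k ≤ n →
    1 ≤ Λ.perm k ∧ Λ.perm k ≤ n ∧ Λ.inv (Λ.perm k) = k ∧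
    1 ≤ Λ.inv k ∧ Λ.inv k ≤ n ∧ Λ.perm (Λ.inv k) = k) ∧
  (∀ k, 1 ≤ k → k + 1 ≤ n → Λ.depth k < m)

/-- The cosimplicial coface action `d_i : FN_m(n) → FN_m(n+1)` on Fox–Neuwirth trees:
`d_0` inserts a new leftmost leaf labeled `1` joined at depth `m−1`; `d_{n+1}` inserts
a new rightmost leaf labeled `n+1` joined at depth `m−1`; an internal `d_i`
(`0 < i < n+1`) doubles the leaf labeled `i`, inserting `i+1` immediately to its right
at depth `m−1` and relabeling larger labels. -/
def coface (m n i : ℕ) (Λ : PreTree) : PreTree :=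
  if i = 0 then
    { perm := fun k => if k = 1 then 1 else Λ.perm (k - 1) + 1
      inv := fun t => if t = 1 then 1 else Λ.inv (t - 1) + 1
      depth := fun k => if k = 1 then m - 1 else Λ.depth (k - 1) }
  else if i = n + 1 then
    { perm := fun k => if k = n + 1 then n + 1 else Λ.perm k
      inv := fun t => if t = n + 1 then n + 1 else Λ.inv t
      depth := fun k => if k = n then m - 1 else Λ.depth k }
  else
    { perm := fun k => if k = Λ.inv i then i else cofaceN i (Λ.perm (codegN (Λ.inv i) k))
      inv := fun t => if t = i then Λ.inv i else cofaceN (Λ.inv i) (Λ.inv (codegN i t))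
      depth := fun k => if k = Λ.inv i then m - 1 else Λ.depth (codegN (Λ.inv i) k) }

/-- `Transforms m n ℓ ψ Λ Γ` : the strictly increasing map `ψ : [n] → [ℓ]` is realized
as a composition of cofaces, and `Γ = ψΛ` is the Fox–Neuwirth tree obtained by applying
the corresponding cofaces to `Λ`. -/
inductive Transforms (m : ℕ) : ℕ → ℕ → (ℕ → ℕ) → PreTree → PreTree → Prop
  | refl (n : ℕ) (Λ : PreTree) : Transforms m n n id Λ Λ
  | step {n ℓ : ℕ} {ψ : ℕ → ℕ} {Λ Γ : PreTree} (k : ℕ) (hk : k ≤ ℓ + 1)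
      (h : Transforms m n ℓ ψ Λ Γ) :
      Transforms m n (ℓ + 1) (fun t => cofaceN k (ψ t)) Λ (coface m ℓ k Γ)

/-- The morphism `ψ` twisted by `Λ`: `ψ^Λ(0) = ψ(0)` and
`ψ^Λ(s) = (σ^{ψΛ})⁻¹(ψ(σ^Λ(s)))` for `s ≥ 1`, where `Γ = ψΛ`. -/
def twisted (ψ : ℕ → ℕ) (Λ Γ : PreTree) : ℕ → ℕ :=
  fun s => if s = 0 then ψ 0 else Γ.inv (ψ (Λ.perm s))


lemma cofaceN_of_lt {u p : ℕ} (h : p < u) : cofaceN u p = p := if_pos h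
lemma cofaceN_of_ge {u p : ℕ} (h : u ≤ p) : cofaceN u p = p + 1 := if_neg (by omega)
lemma codegN_of_le {u x : ℕ} (h : x ≤ u) : codegN u x = x := if_pos h

lemma cofaceN_le (u p : ℕ) : p ≤ cofaceN u p ∧ cofaceN u p ≤ p + 1 := by
  simp only [cofaceN]; split_ifs <;> omega

lemma cofaceN_mono {u a b : ℕ} (h : a < b) : cofaceN u a < cofaceN u b := by
  simp only [cofaceN]; split_ifs <;> omega

lemma coface_inv_zero (m ℓ : ℕ) (Γ : PreTree) (t : ℕ) :
    (coface m ℓ 0 Γ).inv t = if t = 1 then 1 else Γ.inv (t - 1) + 1 := by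
  simp [coface]

lemma coface_inv_top (m ℓ : ℕ) (Γ : PreTree) (t : ℕ) :
    (coface m ℓ (ℓ + 1) Γ).inv t = if t = ℓ + 1 then ℓ + 1 else Γ.inv t := by
  simp [coface]

lemma coface_inv_mid (m ℓ k : ℕ) (Γ : PreTree) (h1 : k ≠ 0) (h2 : k ≠ ℓ + 1) (t : ℕ) :
    (coface m ℓ k Γ).inv t =
      if t = k then Γ.inv k else cofaceN (Γ.inv k) (Γ.inv (codegN k t)) := by
  simp [coface, h1, h2]

lemma key_lemma (m n ℓ : ℕ) (ψ : ℕ → ℕ) (Λ Γ : PreTree)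
    (h : Transforms m n ℓ ψ Λ Γ) :
    Λ.Wf m n →
    ((∀ s, s ≤ n → (1 ≤ s → 1 ≤ ψ s) ∧ ψ s ≤ ℓ) ∧
     (∀ x, ψ 0 < x → x ≤ ℓ → ψ 0 < Γ.inv x) ∧
     (∀ x, 1 ≤ x → x ≤ ψ 0 → Γ.inv x ≤ ψ 0) ∧
     StrictMonoOn (twisted ψ Λ Γ) (Set.Iic n)) := by
  induction h with
  | refl Λ =>
    intro hΛ
    have hid : ∀ x ∈ Set.Iic n, twisted id Λ Λ x = x := by
      intro x hx
      have hx' : x ≤ n := Set.mem_Iic.mp hx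
      simp only [twisted, id_eq]
      split_ifs with h0
      · omega
      · exact (hΛ.1 x (by omega) hx').2.2.1
    refine ⟨fun s hs => ⟨fun h1 => h1, hs⟩,
      fun x hx1 hx2 => (hΛ.1 x (by simp only [id_eq] at hx1; omega) hx2).2.2.2.1,
      fun x hx1 hx2 => by simp only [id_eq] at hx2; omega,
      fun a ha b hb hab => by rw [hid a ha, hid b hb]; exact hab⟩
  | step k hk h ih =>
    rename_i ℓ ψ Λ Γ
    intro hΛ
    obtain ⟨ih1, ih2, ih3, ih4⟩ := ih hΛ
    beta_reduce
    have hψ0 : ψ 0 ≤ ℓ := (ih1 0 (Nat.zero_le n)).2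
    have htperm : ∀ s, 1 ≤ s → s ≤ n → 1 ≤ ψ (Λ.perm s) ∧ ψ (Λ.perm s) ≤ ℓ := by
      intro s hs1 hs2
      obtain ⟨hp1, hp2, -⟩ := hΛ.1 s hs1 hs2
      exact ⟨(ih1 _ hp2).1 hp1, (ih1 _ hp2).2⟩
    have htw : ∀ s, 1 ≤ s → twisted ψ Λ Γ s = Γ.inv (ψ (Λ.perm s)) := by
      intro s hs; simp only [twisted, if_neg (show ¬ s = 0 by omega)]
    have htw0 : twisted ψ Λ Γ 0 = ψ 0 := by simp [twisted]
    have hv : ∀ s, 1 ≤ s → s ≤ n → ψ 0 < Γ.inv (ψ (Λ.perm s)) := by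
      intro s hs1 hs2
      have := ih4 (Set.mem_Iic.mpr (Nat.zero_le n)) (Set.mem_Iic.mpr hs2) hs1
      rw [htw0, htw s hs1] at this
      exact this
    have part1 : ∀ s, s ≤ n → (1 ≤ s → 1 ≤ cofaceN k (ψ s)) ∧ cofaceN k (ψ s) ≤ ℓ + 1 := by
      intro s hs
      have h1 := ih1 s hs
      have h2 := cofaceN_le k (ψ s)
      exact ⟨fun hs1 => by have := h1.1 hs1; omega, by have := h1.2; omega⟩
    rcases eq_or_ne k 0 with hk0 | hk0
    · -- case k = 0
      subst hk0
      have e0 : ∀ x, cofaceN 0 x = x + 1 := fun x => cofaceN_of_ge (Nat.zero_le x)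
      have et : ∀ s, 1 ≤ s → s ≤ n →
          twisted (fun t => cofaceN 0 (ψ t)) Λ (coface m ℓ 0 Γ) s
            = Γ.inv (ψ (Λ.perm s)) + 1 := by
        intro s h1 h2
        have hp := htperm s h1 h2
        simp only [twisted, if_neg (show ¬ s = 0 by omega), e0]
        rw [coface_inv_zero, if_neg (by omega)]
        simp
      refine ⟨part1, ?_, ?_, ?_⟩
      · intro x hx1 hx2
        rw [e0] at hx1 ⊢
        rw [coface_inv_zero, if_neg (by omega)]
        have := ih2 (x - 1) (by omega) (by omega)
        omega
      · intro x hx1 hx2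
        rw [e0] at hx2 ⊢
        rw [coface_inv_zero]
        split_ifs with h1
        · omega
        · have := ih3 (x - 1) (by omega) (by omega)
          omega
      · intro a ha b hb hab
        have hb1 : 1 ≤ b := by omega
        have hbn : b ≤ n := Set.mem_Iic.mp hb
        rw [et b hb1 hbn]
        rcases Nat.eq_zero_or_pos a with ha0 | ha1
        · subst ha0
          have eta : twisted (fun t => cofaceN 0 (ψ t)) Λ (coface m ℓ 0 Γ) 0
              = cofaceN 0 (ψ 0) := by simp [twisted]
          rw [eta, e0]
          have := hv b hb1 hbn
          omega
        · rw [et a ha1 (Set.mem_Iic.mp ha)]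
          have := ih4 ha hb hab
          rw [htw a ha1, htw b hb1] at this
          omega
    · rcases eq_or_ne k (ℓ + 1) with hkl | hkl
      · -- case k = ℓ + 1
        subst hkl
        have e0 : cofaceN (ℓ + 1) (ψ 0) = ψ 0 := cofaceN_of_lt (by omega)
        have et : ∀ s, 1 ≤ s → s ≤ n →
            twisted (fun t => cofaceN (ℓ + 1) (ψ t)) Λ (coface m ℓ (ℓ + 1) Γ) s
              = Γ.inv (ψ (Λ.perm s)) := by
          intro s h1 h2
          have hp := htperm s h1 h2
          simp only [twisted, if_neg (show ¬ s = 0 by omega)]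
          rw [cofaceN_of_lt (by omega), coface_inv_top, if_neg (by omega)]
        refine ⟨part1, ?_, ?_, ?_⟩
        · intro x hx1 hx2
          rw [e0] at hx1 ⊢
          rw [coface_inv_top]
          split_ifs with h1
          · omega
          · exact ih2 x hx1 (by omega)
        · intro x hx1 hx2
          rw [e0] at hx2 ⊢
          rw [coface_inv_top, if_neg (by omega)]
          exact ih3 x hx1 hx2
        · intro a ha b hb hab
          have hb1 : 1 ≤ b := by omega
          have hbn : b ≤ n := Set.mem_Iic.mp hb
          rw [et b hb1 hbn]
          rcases Nat.eq_zero_or_pos a with ha0 | ha1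
          · subst ha0
            have eta : twisted (fun t => cofaceN (ℓ + 1) (ψ t)) Λ (coface m ℓ (ℓ + 1) Γ) 0
                = cofaceN (ℓ + 1) (ψ 0) := by simp [twisted]
            rw [eta, e0]
            exact hv b hb1 hbn
          · rw [et a ha1 (Set.mem_Iic.mp ha)]
            have := ih4 ha hb hab
            rw [htw a ha1, htw b hb1] at this
            exact this
      · -- internal case 1 ≤ k ≤ ℓ
        have hk1 : 1 ≤ k := by omega
        have hkℓ : k ≤ ℓ := by omega
        have keyv : ∀ t, 1 ≤ t → t ≤ ℓ →
            (coface m ℓ k Γ).inv (cofaceN k t) = cofaceN (Γ.inv k) (Γ.inv t) := by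
          intro t ht1 ht2
          have h1 : cofaceN k t ≠ k := by simp only [cofaceN]; split_ifs <;> omega
          have h2 : codegN k (cofaceN k t) = t := by
            simp only [cofaceN, codegN]; split_ifs <;> omega
          rw [coface_inv_mid m ℓ k Γ hk0 hkl, if_neg h1, h2]
        have et : ∀ s, 1 ≤ s → s ≤ n →
            twisted (fun t => cofaceN k (ψ t)) Λ (coface m ℓ k Γ) s
              = cofaceN (Γ.inv k) (Γ.inv (ψ (Λ.perm s))) := by
          intro s h1 h2
          have hp := htperm s h1 h2
          simp only [twisted, if_neg (show ¬ s = 0 by omega)]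
          exact keyv _ hp.1 hp.2
        refine ⟨part1, ?_, ?_, ?_⟩
        · intro x hx1 hx2
          rw [coface_inv_mid m ℓ k Γ hk0 hkl]
          rcases Nat.lt_or_ge (ψ 0) k with hpk | hpk
          · rw [cofaceN_of_lt hpk] at hx1 ⊢
            split_ifs with hxk
            · exact ih2 k (hxk ▸ hx1) hkℓ
            · have hy : ψ 0 < codegN k x ∧ codegN k x ≤ ℓ := by
                simp only [codegN]; split_ifs <;> omega
              have h3 := ih2 _ hy.1 hy.2
              have h4 := cofaceN_le (Γ.inv k) (Γ.inv (codegN k x))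
              omega
          · rw [cofaceN_of_ge hpk] at hx1 ⊢
            have hc : Γ.inv k ≤ ψ 0 := ih3 k hk1 hpk
            rw [if_neg (by omega)]
            have hy : ψ 0 < codegN k x ∧ codegN k x ≤ ℓ := by
              simp only [codegN]; split_ifs <;> omega
            have h3 := ih2 _ hy.1 hy.2
            rw [cofaceN_of_ge (by omega)]
            omega
        · intro x hx1 hx2
          rw [coface_inv_mid m ℓ k Γ hk0 hkl]
          rcases Nat.lt_or_ge (ψ 0) k with hpk | hpk
          · rw [cofaceN_of_lt hpk] at hx2 ⊢
            rw [if_neg (by omega), codegN_of_le (by omega)]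
            have h3 := ih3 x hx1 hx2
            have hc : ψ 0 < Γ.inv k := ih2 k hpk hkℓ
            rw [cofaceN_of_lt (by omega)]
            exact h3
          · rw [cofaceN_of_ge hpk] at hx2 ⊢
            have hc : Γ.inv k ≤ ψ 0 := ih3 k hk1 hpk
            split_ifs with hxk
            · omega
            · have hy : 1 ≤ codegN k x ∧ codegN k x ≤ ψ 0 := by
                simp only [codegN]; split_ifs <;> omega
              have h3 := ih3 _ hy.1 hy.2
              have h4 := cofaceN_le (Γ.inv k) (Γ.inv (codegN k x))
              omega
        · intro a ha b hb hab
          have hb1 : 1 ≤ b := by omega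
          have hbn : b ≤ n := Set.mem_Iic.mp hb
          rw [et b hb1 hbn]
          rcases Nat.eq_zero_or_pos a with ha0 | ha1
          · subst ha0
            have eta : twisted (fun t => cofaceN k (ψ t)) Λ (coface m ℓ k Γ) 0
                = cofaceN k (ψ 0) := by simp [twisted]
            rw [eta]
            have hvb := hv b hb1 hbn
            rcases Nat.lt_or_ge (ψ 0) k with hpk | hpk
            · rw [cofaceN_of_lt hpk]
              have h4 := cofaceN_le (Γ.inv k) (Γ.inv (ψ (Λ.perm b)))
              omega
            · rw [cofaceN_of_ge hpk]
              have hc : Γ.inv k ≤ ψ 0 := ih3 k hk1 hpk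
              rw [cofaceN_of_ge (by omega)]
              omega
          · rw [et a ha1 (Set.mem_Iic.mp ha)]
            have := ih4 ha hb hab
            rw [htw a ha1, htw b hb1] at this
            exact cofaceN_mono this

/-- The twisted morphism `ψ^Λ : [n] → [ℓ]` is strictly increasing. -/
theorem twisted_strictMonoOn (m n ℓ : ℕ) (ψ : ℕ → ℕ) (Λ Γ : PreTree)
    (hΛ : Λ.Wf m n) (h : Transforms m n ℓ ψ Λ Γ) :
    StrictMonoOn (twisted ψ Λ Γ) (Set.Iic n) := by
  exact (key_lemma m n ℓ ψ Λ Γ h hΛ).2.2.2
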